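/- Let (pₙ) be a sequence of points in Euclidean space ℝ³ converging to a point p. Then there exist a map γ : [0,1] → ℝ³ that is continuously differentiable on [0,1] and an infinite set S ⊆ ℕ such that γ(1) = p and for every n ∈ S there exists s ∈ [0,1] with γ(s) = pₙ. -/

import Mathlib

/-- Through the limit `p` of a convergent sequence `(pₙ)` in `ℝ³` and infinitely many of its
terms, one can pass a curve of class `C¹` on `[0,1]` ending at `p`. -/
theorem exists_C1_curve_through_infinitely_many_points
    (p : EuclideanSpace ℝ (Fin 3)) (pseq : ℕ → EuclideanSpace ℝ (Fin 3))
    (hconv : Filter.Tendsto pseq Filter.atTop (nhds p)) :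
    ∃ γ : ℝ → EuclideanSpace ℝ (Fin 3), ∃ S : Set ℕ, S.Infinite ∧
      ContDiffOn ℝ 1 γ (Set.Icc 0 1) ∧ γ 1 = p ∧
      ∀ n ∈ S, ∃ s ∈ Set.Icc (0:ℝ) 1, γ s = pseq n := by
  classical
  -- Extract a rapidly converging subsequence
  have hexist : ∀ k : ℕ, ∃ N, ∀ m ≥ N, dist (pseq m) p < (8:ℝ)⁻¹ ^ k := by
    intro k
    exact Metric.tendsto_atTop.mp hconv _ (by positivity)
  choose N hN using hexist
  set n : ℕ → ℕ := fun k => Nat.rec (N 0) (fun k ih => max (ih + 1) (N (k + 1))) k with hn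
  have hmono : StrictMono n := by
    apply strictMono_nat_of_lt_succ
    intro k
    have : n (k + 1) = max (n k + 1) (N (k + 1)) := rfl
    omega
  have hnN : ∀ k, N k ≤ n k := by
    intro k
    cases k with
    | zero => exact le_rfl
    | succ k =>
      have : n (k + 1) = max (n k + 1) (N (k + 1)) := rfl
      omega
  set v : ℕ → EuclideanSpace ℝ (Fin 3) := fun j => pseq (n j) - p with hvdef
  have hv : ∀ j, ‖v j‖ ≤ (8:ℝ)⁻¹ ^ j := by
    intro j
    have := hN j (n j) (hnN j)
    rw [dist_eq_norm] at this
    exact this.le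
  -- The bump function
  set f : ContDiffBump (1:ℝ) := ⟨1/4, 1/2, by norm_num, by norm_num⟩ with hf
  -- bound on the derivative of the bump
  obtain ⟨C, hC⟩ := (f.hasCompactSupport.deriv).exists_bound_of_continuous
    ((f.contDiff (n := 1)).continuous_deriv le_rfl)
  have hC0 : 0 ≤ C := le_trans (norm_nonneg _) (hC 0)
  -- the series of functions
  set g : ℕ → ℝ → EuclideanSpace ℝ (Fin 3) :=
    fun j t => f ((2:ℝ) ^ j * (1 - t)) • v j with hg
  set g' : ℕ → ℝ → EuclideanSpace ℝ (Fin 3) :=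
    fun j t => (deriv (⇑f) ((2:ℝ) ^ j * (1 - t)) * ((2:ℝ) ^ j * (-1))) • v j with hg'
  have hder : ∀ j t, HasDerivAt (g j) (g' j t) t := by
    intro j t
    have hin : HasDerivAt (fun t : ℝ => (2:ℝ) ^ j * (1 - t)) ((2:ℝ) ^ j * (-1)) t := by
      simpa using (((hasDerivAt_id t).const_sub 1).const_mul ((2:ℝ) ^ j))
    have hb : HasDerivAt (⇑f) (deriv (⇑f) ((2:ℝ) ^ j * (1 - t))) ((2:ℝ) ^ j * (1 - t)) :=
      ((f.contDiffAt (n := 1)).differentiableAt (by simp)).hasDerivAt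
    exact (hb.comp t hin).smul_const (v j)
  set u : ℕ → ℝ := fun j => C * ((2:ℝ) ^ j * (8:ℝ)⁻¹ ^ j) with hu
  have husum : Summable u := by
    have h48 : ∀ j : ℕ, (2:ℝ) ^ j * (8:ℝ)⁻¹ ^ j = (4:ℝ)⁻¹ ^ j := by
      intro j; rw [← mul_pow]; norm_num
    have hsum4 : Summable (fun j : ℕ => C * (4:ℝ)⁻¹ ^ j) :=
      (summable_geometric_of_lt_one (by norm_num) (by norm_num)).mul_left C
    exact hsum4.congr fun j => by
      show C * (4:ℝ)⁻¹ ^ j = C * ((2:ℝ) ^ j * (8:ℝ)⁻¹ ^ j)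
      rw [h48 j]
  have hbound : ∀ j t, ‖g' j t‖ ≤ u j := by
    intro j t
    rw [hg']
    have h1 : ‖(deriv (⇑f) ((2:ℝ) ^ j * (1 - t)) * ((2:ℝ) ^ j * (-1))) • v j‖
        = |deriv (⇑f) ((2:ℝ) ^ j * (1 - t))| * (2:ℝ) ^ j * ‖v j‖ := by
      rw [norm_smul]
      simp [abs_mul, abs_of_nonneg (by positivity : (0:ℝ) ≤ (2:ℝ) ^ j), mul_assoc]
    rw [h1, hu]
    have h2 : |deriv (⇑f) ((2:ℝ) ^ j * (1 - t))| * (2:ℝ) ^ j ≤ C * (2:ℝ) ^ j := by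
      gcongr
      exact hC _
    calc |deriv (⇑f) ((2:ℝ) ^ j * (1 - t))| * (2:ℝ) ^ j * ‖v j‖
        ≤ C * (2:ℝ) ^ j * ((8:ℝ)⁻¹ ^ j) := by
          apply mul_le_mul h2 (hv j) (norm_nonneg _) (by positivity)
      _ = C * ((2:ℝ) ^ j * (8:ℝ)⁻¹ ^ j) := by ring
  -- the series converges at the point 1
  have hrOut : f.rOut = 1/2 := rfl
  have hrIn : f.rIn = 1/4 := rfl
  have hg1 : ∀ j, g j 1 = 0 := by
    intro j
    have h2 : (2:ℝ) ^ j * (1 - 1) = 0 := by ring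
    have hf0 : f ((2:ℝ) ^ j * (1 - 1)) = 0 := by
      rw [h2]
      apply f.zero_of_le_dist
      rw [hrOut, Real.dist_eq]
      norm_num
    show f ((2:ℝ) ^ j * (1 - 1)) • v j = 0
    rw [hf0, zero_smul]
  have hsum1 : Summable fun j => g j 1 := by
    simpa [hg1] using summable_zero
  -- the curve
  set γ : ℝ → EuclideanSpace ℝ (Fin 3) := fun t => p + ∑' j, g j t with hγ
  have hderγ : ∀ t, HasDerivAt (fun t => ∑' j, g j t) (∑' j, g' j t) t := by
    intro t
    exact hasDerivAt_tsum husum hder hbound hsum1 t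
  have hcd : ContDiff ℝ 1 γ := by
    rw [hγ]
    apply ContDiff.add contDiff_const
    rw [contDiff_one_iff_deriv]
    constructor
    · exact fun t => (hderγ t).differentiableAt
    · have hde : deriv (fun t => ∑' j, g j t) = fun t => ∑' j, g' j t := by
        funext t
        exact (hderγ t).deriv
      rw [hde]
      apply continuous_tsum _ husum hbound
      intro j
      have hderivcont : Continuous (deriv (⇑f)) :=
        (f.contDiff (n := 1)).continuous_deriv le_rfl
      have : Continuous fun t : ℝ =>
          deriv (⇑f) ((2:ℝ) ^ j * (1 - t)) * ((2:ℝ) ^ j * (-1)) :=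
        ((hderivcont.comp (continuous_const.mul (continuous_const.sub continuous_id))).mul continuous_const)
      exact this.smul continuous_const
  -- value at 1
  have hγ1 : γ 1 = p := by
    show p + ∑' j, g j 1 = p
    rw [tsum_congr hg1, tsum_zero, add_zero]
  -- values at the points 1 - 2⁻ᵏ
  have hγak : ∀ k : ℕ, γ (1 - (2:ℝ)⁻¹ ^ k) = pseq (n k) := by
    intro k
    have harg : ∀ j : ℕ, (2:ℝ) ^ j * (1 - (1 - (2:ℝ)⁻¹ ^ k)) = (2:ℝ) ^ j * (2:ℝ)⁻¹ ^ k := by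
      intro j; ring_nf
    have hzero : ∀ j, j ≠ k → g j (1 - (2:ℝ)⁻¹ ^ k) = 0 := by
      intro j hj
      have : f ((2:ℝ) ^ j * (1 - (1 - (2:ℝ)⁻¹ ^ k))) = 0 := by
        rw [harg j]
        apply f.zero_of_le_dist
        rw [Real.dist_eq]
        rcases lt_or_gt_of_ne hj with h | h
        · -- j < k : 2^j * 2⁻ᵏ ≤ 1/2
          have hx : (2:ℝ) ^ j * (2:ℝ)⁻¹ ^ k ≤ 1/2 := by
            rw [inv_pow, ← div_eq_mul_inv, div_le_iff₀ (by positivity)]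
            calc (2:ℝ) ^ j = (2:ℝ) ^ (j+1) / 2 := by ring
              _ ≤ (2:ℝ) ^ k / 2 := by
                  gcongr
                  · norm_num
                  · omega
              _ = 1/2 * 2 ^ k := by ring
          have hx0 : (0:ℝ) ≤ (2:ℝ) ^ j * (2:ℝ)⁻¹ ^ k := by positivity
          rw [hrOut, abs_of_nonpos (by linarith)]
          linarith
        · -- j > k : 2^j * 2⁻ᵏ ≥ 2
          have hx : (2:ℝ) ≤ (2:ℝ) ^ j * (2:ℝ)⁻¹ ^ k := by
            rw [inv_pow, ← div_eq_mul_inv, le_div_iff₀ (by positivity)]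
            calc (2:ℝ) * 2 ^ k = (2:ℝ) ^ (k+1) := by ring
              _ ≤ (2:ℝ) ^ j := by
                  apply pow_le_pow_right₀ (by norm_num)
                  omega
          rw [hrOut, abs_of_nonneg (by linarith)]
          linarith
      show f ((2:ℝ) ^ j * (1 - (1 - (2:ℝ)⁻¹ ^ k))) • v j = 0
      rw [this, zero_smul]

    have hone : g k (1 - (2:ℝ)⁻¹ ^ k) = v k := by
      have harg2 : (2:ℝ) ^ k * (1 - (1 - (2:ℝ)⁻¹ ^ k)) = 1 := by
        rw [harg k, inv_pow, mul_inv_cancel₀ (by positivity)]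
      have hfone : f ((2:ℝ) ^ k * (1 - (1 - (2:ℝ)⁻¹ ^ k))) = 1 := by
        rw [harg2]
        apply f.one_of_mem_closedBall
        rw [Metric.mem_closedBall, dist_self, hrIn]
        norm_num
      show f ((2:ℝ) ^ k * (1 - (1 - (2:ℝ)⁻¹ ^ k))) • v k = v k
      rw [hfone, one_smul]
    have : (∑' j, g j (1 - (2:ℝ)⁻¹ ^ k)) = v k := by
      rw [tsum_eq_single k (fun j hj => hzero j hj), hone]
    show p + ∑' j, g j (1 - (2:ℝ)⁻¹ ^ k) = pseq (n k)
    rw [this]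
    show p + (pseq (n k) - p) = pseq (n k)
    abel
  refine ⟨γ, Set.range n, ?_, hcd.contDiffOn, hγ1, ?_⟩
  · exact Set.infinite_range_of_injective hmono.injective
  · rintro m ⟨k, rfl⟩
    refine ⟨1 - (2:ℝ)⁻¹ ^ k, ?_, hγak k⟩
    constructor
    · have h1 : (2:ℝ)⁻¹ ^ k ≤ 1 := by
        apply pow_le_one₀ <;> norm_num
      linarith
    · have : (0:ℝ) ≤ (2:ℝ)⁻¹ ^ k := by positivity
      linarith
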